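/- Let k ∈ ℕ^ℓ, K = (∏_{i=1}^ℓ (kᵢ+1)) − 1, and let P_K be the path on K vertices. Then P_K is a subgraph of the closure of the rooted tree F_k; in particular, the path on K vertices has a treedepth decomposition of topological height ℓ with level heights k₁,…,k_ℓ. -/

import Mathlib

/-- Rooted trees (vertices are nodes; a node's children are given by a list). -/
inductive RTree where
  | node : List RTree → RTree

/-- `IsPos t p` : `p` (a list of child indices) is a position (vertex) of `t`. -/
inductive IsPos : RTree → List ℕ → Prop
  | nil (t : RTree) : IsPos t []
  | cons {cs : List RTree} {i : ℕ} {t : RTree} {p : List ℕ} :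
      cs[i]? = some t → IsPos t p → IsPos (.node cs) (i :: p)

/-- `spine m cs` is a path of `m+1` vertices whose bottom vertex has the trees in
`cs` as its subtrees. -/
def spine : ℕ → List RTree → RTree
  | 0, cs => RTree.node cs
  | m + 1, cs => RTree.node [spine m cs]

/-- `buildF k₁ [k₂,…,k_ℓ]` is the maximal tree `F_k` with level heights
`(k₁,…,k_ℓ)` and out-degree `kᵢ+1` at the `i`-th non-degenerate vertex. -/
def buildF : ℕ → List ℕ → RTree
  | k₁, [] => spine (k₁ - 1) []
  | k₁, k₂ :: rest => spine (k₁ - 1) (List.replicate (k₁ + 1) (buildF k₂ rest))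

-- helpers

lemma repl_prefix {i j : ℕ} (h : i ≤ j) :
    List.replicate i (0:ℕ) <+: List.replicate j 0 :=
  ⟨List.replicate (j - i) 0, by rw [← List.replicate_add]; congr 1; omega⟩

lemma repl_prefix_app {i j : ℕ} (h : i ≤ j) (l : List ℕ) :
    List.replicate i (0:ℕ) <+: List.replicate j 0 ++ l :=
  (repl_prefix h).trans (List.prefix_append _ _)

lemma get?_replicate {t : RTree} {n i : ℕ} (h : i < n) :
    (List.replicate n t)[i]? = some t := by
  simp [List.getElem?_replicate, h]

lemma isPos_spine_repl (cs : List RTree) : ∀ j m, j ≤ m →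
    IsPos (spine m cs) (List.replicate j 0)
  | 0, m, _ => by exact IsPos.nil _
  | j+1, m+1, h => by
      rw [List.replicate_succ]
      exact IsPos.cons (by simp) (isPos_spine_repl cs j m (by omega))

lemma isPos_spine_entry {cs : List RTree} {i : ℕ} {t : RTree} {p : List ℕ}
    (hg : cs[i]? = some t) (hp : IsPos t p) :
    ∀ m, IsPos (spine m cs) (List.replicate m 0 ++ i :: p)
  | 0 => by exact IsPos.cons hg hp
  | m+1 => by
      rw [List.replicate_succ]
      exact IsPos.cons (by simp) (isPos_spine_entry hg hp m)

def Rel2 (p q : List ℕ) : Prop := p <+: q ∨ q <+: p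

lemma prefix_app_cons {pre : List ℕ} {i : ℕ} {p q : List ℕ} (h : p <+: q) :
    pre ++ i :: p <+: pre ++ i :: q := by
  obtain ⟨t, rfl⟩ := h
  exact ⟨t, by simp⟩

def pathList : ℕ → List ℕ → List (List ℕ)
  | k, [] => (List.range k).map (fun i => List.replicate i 0)
  | k, k₂ :: rest =>
      ((List.range (k+1)).map (fun i =>
        ((pathList k₂ rest).map (fun p => List.replicate (k-1) 0 ++ i :: p)) ++
        (if i < k then [List.replicate i 0] else []))).flatten

theorem pathList_spec : ∀ (ks : List ℕ) (k : ℕ), 1 ≤ k → (∀ j ∈ ks, 1 ≤ j) →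
    (pathList k ks).length + 1 = (k+1) * (ks.map (· + 1)).prod ∧
    (∀ p ∈ pathList k ks, IsPos (buildF k ks) p) ∧
    (pathList k ks).Nodup ∧
    (pathList k ks).Chain' Rel2 := by
  intro ks
  induction ks with
  | nil =>
      intro k hk _
      refine ⟨by simp [pathList], ?_, ?_, ?_⟩
      · intro p hp
        simp only [pathList, List.mem_map, List.mem_range] at hp
        obtain ⟨i, hi, rfl⟩ := hp
        exact isPos_spine_repl [] i (k-1) (by omega)
      · refine (List.nodup_range (n := k)).map ?_
        intro a b hab
        have := congrArg List.length hab
        simpa using this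
      · obtain ⟨k', rfl⟩ : ∃ k', k = k' + 1 := ⟨k - 1, by omega⟩
        rw [pathList, List.Chain', List.isChain_map, List.isChain_range_succ]
        intro m _
        exact Or.inl (repl_prefix (by omega))
  | cons k₂ rest IH =>
      intro k hk hks
      have hk₂ : 1 ≤ k₂ := hks k₂ (by simp)
      obtain ⟨hlen, hpos, hnd, hch⟩ := IH k₂ hk₂ (fun j hj => hks j (by simp [hj]))
      set L := pathList k₂ rest with hL
      set P := (rest.map (· + 1)).prod with hP
      have hPpos : 1 ≤ P := Nat.one_le_iff_ne_zero.mpr (by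
        simp only [hP, Nat.ne_zero_iff_zero_lt]
        exact List.prod_pos (by
          intro x hx
          simp only [List.mem_map] at hx
          obtain ⟨a, _, rfl⟩ := hx
          omega))
      have hLlen : 1 ≤ L.length := by nlinarith [hlen]
      have hLne : L ≠ [] := by
        intro h; rw [h] at hLlen; simp at hLlen
      set f : ℕ → List ℕ → List ℕ := fun i p => List.replicate (k-1) 0 ++ i :: p with hf
      set block : ℕ → List (List ℕ) := fun i =>
        (L.map (f i)) ++ (if i < k then [List.replicate i 0] else []) with hblock
      have hplist : pathList k (k₂ :: rest) = ((List.range (k+1)).map block).flatten := rfl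
      -- block membership characterization
      have hmem : ∀ i p, p ∈ block i →
          (∃ q ∈ L, p = f i q) ∨ (i < k ∧ p = List.replicate i 0) := by
        intro i p hp
        simp only [hblock, List.mem_append, List.mem_map] at hp
        rcases hp with ⟨q, hq, rfl⟩ | hp
        · exact Or.inl ⟨q, hq, rfl⟩
        · by_cases h : i < k
          · simp [h] at hp; exact Or.inr ⟨h, hp⟩
          · simp [h] at hp
      have hflen : ∀ i q, (f i q).length = k + q.length := by
        intro i q; simp [hf]; omega
      have hblockne : ∀ i, block i ≠ [] := by
        intro i h
        have : L.map (f i) = [] := by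
          cases (List.append_eq_nil_iff.mp (hblock ▸ h)); assumption
        exact hLne (List.map_eq_nil_iff.mp this)
      constructor
      · -- length
        rw [hplist, List.length_flatten, List.map_map]
        rw [show List.range (k+1) = List.range k ++ [k] by rw [List.range_succ]]
        rw [List.map_append, List.sum_append]
        have h1 : ((List.range k).map (List.length ∘ block)).sum = k * (L.length + 1) := by
          have : (List.range k).map (List.length ∘ block)
              = (List.range k).map (fun _ => L.length + 1) := by
            apply List.map_congr_left
            intro i hi
            simp only [List.mem_range] at hi
            simp [hblock, hi]
          rw [this, List.map_const', List.sum_replicate, smul_eq_mul, List.length_range]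
        rw [h1]
        have h2 : ([k].map (List.length ∘ block)).sum = L.length := by
          simp [hblock]
        rw [h2]
        have h3 : (List.map (· + 1) (k₂ :: rest)).prod = (k₂ + 1) * P := by simp [hP]
        rw [h3]
        nlinarith [hlen]
      refine ⟨?_, ?_, ?_⟩
      · -- IsPos
        intro p hp
        rw [hplist, List.mem_flatten] at hp
        obtain ⟨l, hl, hpl⟩ := hp
        simp only [List.mem_map, List.mem_range] at hl
        obtain ⟨i, hik, rfl⟩ := hl
        show IsPos (spine (k-1) (List.replicate (k+1) (buildF k₂ rest))) p
        rcases hmem i p hpl with ⟨q, hq, rfl⟩ | ⟨hik', rfl⟩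
        · exact isPos_spine_entry (get?_replicate hik) (hpos q hq) (k-1)
        · exact isPos_spine_repl _ i (k-1) (by omega)
      · -- Nodup
        rw [hplist, List.nodup_flatten]
        constructor
        · intro l hl
          simp only [List.mem_map, List.mem_range] at hl
          obtain ⟨i, hik, rfl⟩ := hl
          rw [hblock, List.nodup_append]
          refine ⟨hnd.map ?_, by split <;> simp, ?_⟩
          · intro a b hab
            simpa [hf] using hab
          · intro x hx y hx' hxy
            subst hxy
            simp only [List.mem_map] at hx
            obtain ⟨q, _, rfl⟩ := hx
            by_cases h : i < k
            · simp only [h, if_true, List.mem_singleton] at hx'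
              have := congrArg List.length hx'
              rw [hflen] at this
              simp at this; omega
            · simp [h] at hx'
        · rw [List.pairwise_map]
          apply List.Pairwise.imp ?_ (List.pairwise_lt_range (n := k+1))
          intro i j hij x hx hx'
          rcases hmem i x hx with ⟨q, _, rfl⟩ | ⟨hik, rfl⟩ <;>
            rcases hmem j _ hx' with ⟨q', _, heq⟩ | ⟨hjk, heq⟩
          · simp only [hf, List.append_cancel_left_eq, List.cons.injEq] at heq
            omega
          · have := congrArg List.length heq
            rw [hflen] at this; simp at this; omega
          · have := congrArg List.length heq
            rw [hflen] at this; simp at this; omega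
          · have := congrArg List.length heq
            simp at this; omega
      · -- Chain'
        rw [hplist, List.Chain', List.isChain_flatten (by
          intro h
          simp only [List.mem_map] at h
          obtain ⟨i, _, hi⟩ := h
          exact hblockne i hi)]
        constructor
        · intro l hl
          simp only [List.mem_map, List.mem_range] at hl
          obtain ⟨i, hik, rfl⟩ := hl
          rw [hblock, List.isChain_append]
          refine ⟨?_, by split <;> simp [List.isChain_singleton], ?_⟩
          · rw [List.isChain_map]
            apply List.IsChain.imp ?_ hch
            intro a b hab
            rcases hab with h | h
            · exact Or.inl (prefix_app_cons h)
            · exact Or.inr (prefix_app_cons h)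
          · intro x hx y hy
            rw [List.getLast?_map] at hx
            by_cases h : i < k
            · simp only [h, if_true] at hy
              simp only [List.head?_cons, Option.mem_some_iff] at hy
              simp only [Option.mem_def, Option.map_eq_some_iff] at hx
              obtain ⟨q, _, rfl⟩ := hx
              subst hy
              exact Or.inr (repl_prefix_app (by omega) _)
            · simp [h] at hy
        · rw [List.isChain_map, List.isChain_range_succ]
          intro m hm x hx y hy
          have hm' : m < k := hm
          -- getLast? of block m is the connector
          rw [hblock] at hx
          simp only [hm', if_true, List.getLast?_append, List.getLast?_singleton,
            Option.or_some, Option.some_or, Option.mem_some_iff] at hx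
          subst hx
          -- head? of block (m+1) is a copy entry
          rw [hblock] at hy
          rw [List.head?_append_of_ne_nil _ (by
            simpa [List.map_eq_nil_iff] using hLne)] at hy
          rw [List.head?_map] at hy
          simp only [Option.mem_def, Option.map_eq_some_iff] at hy
          obtain ⟨q, _, rfl⟩ := hy
          exact Or.inl (repl_prefix_app (by omega) _)


/-- For `K = (∏ᵢ (kᵢ+1)) − 1`, the path on `K` vertices is a subgraph of the
closure of `F_k`: there is an injective labeling of the path vertices by vertices
of `F_k` such that consecutive path vertices are in ancestor–descendant relation
(one position is a prefix of the other). -/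
theorem path_subgraph_closure_maximal_tree (k : ℕ) (ks : List ℕ) (hk : 1 ≤ k)
    (hks : ∀ j ∈ ks, 1 ≤ j) (K : ℕ)
    (hK : K + 1 = (k + 1) * (ks.map (· + 1)).prod) :
    ∃ label : Fin K → List ℕ, Function.Injective label ∧
      (∀ i, IsPos (buildF k ks) (label i)) ∧
      ∀ i j : Fin K, (i : ℕ) + 1 = (j : ℕ) →
        (label i <+: label j ∨ label j <+: label i) := by
  obtain ⟨hlen, hpos, hnd, hch⟩ := pathList_spec ks k hk hks
  have hKlen : (pathList k ks).length = K := by omega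
  refine ⟨fun i => (pathList k ks).get ⟨i, by omega⟩, ?_, ?_, ?_⟩
  · intro a b hab
    have := (hnd.get_inj_iff).mp hab
    have := Fin.mk.injEq _ _ _ _ ▸ this
    exact Fin.ext (by simpa using this)
  · intro i
    exact hpos _ (List.get_mem _ _)
  · intro i j hij
    obtain ⟨j, hjK⟩ := j
    simp only at hij
    subst hij
    rw [List.Chain', List.isChain_iff_getElem] at hch
    have h := hch i (by omega)
    rcases h with h | h
    · left; simpa using h
    · right; simpa using h
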